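/- Let 0 < t_low ≤ t_high be reals and let M, N, C₀ be positive integers with M ≤ C₀N. For each k ∈ {1, …, M} let s_k : ℕ → ℝ be a strictly increasing sequence (the push times of worker k) with s_k(i+1) − s_k(i) ≥ t_low for all i. Then: (a) for every σ ∈ ℝ, the number of pairs (k, i) with s_k(i) ∈ (σ, σ + t_high] is at most M(⌊t_high / t_low⌋ + 1); and (b) if (u_ℓ) is a strictly increasing sequence of reals (the master's update times) such that for every ℓ the number of pairs (k, i) with s_k(i) ∈ (u_ℓ, u_{ℓ+1}] is at least N, then for every σ ∈ ℝ the number of indices ℓ with u_ℓ ∈ (σ, σ + t_high] is at most C₀(⌊t_high / t_low⌋ + 1) + 1. -/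
import Mathlib

open Set

-- Per-worker counting: a sequence with consecutive gaps ≥ t_low has at most
-- ⌊t_high/t_low⌋ + 1 terms in any window (σ, σ + t_high].
lemma gap_count (t_low t_high : ℝ) (h_low : 0 < t_low) (f : ℕ → ℝ)
    (hgap : ∀ i, t_low ≤ f (i + 1) - f i) (σ : ℝ) :
    {i : ℕ | f i ∈ Set.Ioc σ (σ + t_high)}.Finite ∧
    {i : ℕ | f i ∈ Set.Ioc σ (σ + t_high)}.ncard ≤ ⌊t_high / t_low⌋₊ + 1 := by
  set S := {i : ℕ | f i ∈ Set.Ioc σ (σ + t_high)} with hS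
  set B := ⌊t_high / t_low⌋₊ with hB
  have hstep : ∀ i m : ℕ, f i + m * t_low ≤ f (i + m) := by
    intro i m
    induction m with
    | zero => simp
    | succ m ih =>
      have := hgap (i + m)
      push_cast
      have : f (i + m) + t_low ≤ f (i + (m + 1)) := by
        have h := hgap (i + m)
        have : i + (m + 1) = (i + m) + 1 := by ring
        rw [this]; linarith
      push_cast at ih ⊢
      nlinarith
  have hsub : S ⊆ ↑(Finset.Icc (sInf S) (sInf S + B)) := by
    intro i hi
    have hne : S.Nonempty := ⟨i, hi⟩
    have hmem : sInf S ∈ S := Nat.sInf_mem hne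
    have hle : sInf S ≤ i := Nat.sInf_le hi
    have h1 : f (sInf S) + (i - sInf S : ℕ) * t_low ≤ f i := by
      have := hstep (sInf S) (i - sInf S)
      rwa [Nat.add_sub_cancel' hle] at this
    have h2 : ((i - sInf S : ℕ) : ℝ) * t_low ≤ t_high := by
      have hfi : f i ≤ σ + t_high := hi.2
      have hf0 : σ < f (sInf S) := hmem.1
      linarith
    have h3 : ((i - sInf S : ℕ) : ℝ) ≤ t_high / t_low := by
      rw [le_div_iff₀ h_low]; exact h2
    have h4 : i - sInf S ≤ B := Nat.le_floor h3
    simp only [Finset.coe_Icc, Set.mem_Icc]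
    exact ⟨hle, by omega⟩
  have hfin : S.Finite := Set.Finite.subset (Finset.Icc _ _).finite_toSet hsub
  refine ⟨hfin, ?_⟩
  calc S.ncard ≤ (↑(Finset.Icc (sInf S) (sInf S + B)) : Set ℕ).ncard :=
        Set.ncard_le_ncard hsub (Finset.Icc _ _).finite_toSet
    _ = (Finset.Icc (sInf S) (sInf S + B)).card := Set.ncard_coe_finset _
    _ ≤ B + 1 := by rw [Nat.card_Icc]; omega

theorem stmt3 (t_low t_high : ℝ) (h_low : 0 < t_low) (h_le : t_low ≤ t_high)
    (M N C₀ : ℕ) (hM : 0 < M) (hN : 0 < N) (hC₀ : 0 < C₀) (hMN : M ≤ C₀ * N)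
    -- `s k i` is the time of the `i`-th push of worker `k`
    (s : Fin M → ℕ → ℝ) (hmono : ∀ k, StrictMono (s k))
    (hgap : ∀ k i, t_low ≤ s k (i + 1) - s k i) :
    -- (a) any window `(σ, σ + t_high]` contains at most `M (⌊t_high/t_low⌋ + 1)` pushes
    (∀ σ : ℝ,
      {p : Fin M × ℕ | s p.1 p.2 ∈ Set.Ioc σ (σ + t_high)}.Finite ∧
      {p : Fin M × ℕ | s p.1 p.2 ∈ Set.Ioc σ (σ + t_high)}.ncard ≤
        M * (⌊t_high / t_low⌋₊ + 1)) ∧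
    -- (b) if between consecutive master updates at least `N` pushes arrive, then any window
    -- `(σ, σ + t_high]` contains at most `C₀ (⌊t_high/t_low⌋ + 1) + 1` master updates
    (∀ u : ℕ → ℝ, StrictMono u →
      (∀ ℓ : ℕ, N ≤ {p : Fin M × ℕ | s p.1 p.2 ∈ Set.Ioc (u ℓ) (u (ℓ + 1))}.ncard) →
      ∀ σ : ℝ,
        {ℓ : ℕ | u ℓ ∈ Set.Ioc σ (σ + t_high)}.Finite ∧
        {ℓ : ℕ | u ℓ ∈ Set.Ioc σ (σ + t_high)}.ncard ≤
          C₀ * (⌊t_high / t_low⌋₊ + 1) + 1) := by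
  classical
  set B := ⌊t_high / t_low⌋₊ with hB
  -- part (a)
  have partA : ∀ σ : ℝ,
      {p : Fin M × ℕ | s p.1 p.2 ∈ Set.Ioc σ (σ + t_high)}.Finite ∧
      {p : Fin M × ℕ | s p.1 p.2 ∈ Set.Ioc σ (σ + t_high)}.ncard ≤ M * (B + 1) := by
    intro σ
    have hk : ∀ k : Fin M,
        {i : ℕ | s k i ∈ Set.Ioc σ (σ + t_high)}.Finite ∧
        {i : ℕ | s k i ∈ Set.Ioc σ (σ + t_high)}.ncard ≤ B + 1 :=
      fun k => gap_count t_low t_high h_low (s k) (hgap k) σ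
    set F : Finset (Fin M × ℕ) :=
      Finset.univ.biUnion (fun k => ((hk k).1.toFinset).image (Prod.mk k)) with hF
    have hSF : {p : Fin M × ℕ | s p.1 p.2 ∈ Set.Ioc σ (σ + t_high)} ⊆ ↑F := by
      rintro ⟨k, i⟩ hp
      simp only [hF, Finset.coe_biUnion, Finset.mem_coe, Finset.mem_biUnion,
        Finset.mem_univ, Finset.mem_image, Set.Finite.mem_toFinset, true_and,
        Set.mem_iUnion]
      exact ⟨k, trivial, i, hp, rfl⟩
    have hfin : {p : Fin M × ℕ | s p.1 p.2 ∈ Set.Ioc σ (σ + t_high)}.Finite :=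
      Set.Finite.subset F.finite_toSet hSF
    refine ⟨hfin, ?_⟩
    calc {p : Fin M × ℕ | s p.1 p.2 ∈ Set.Ioc σ (σ + t_high)}.ncard
        ≤ (↑F : Set (Fin M × ℕ)).ncard := Set.ncard_le_ncard hSF F.finite_toSet
      _ = F.card := Set.ncard_coe_finset _
      _ ≤ ∑ k : Fin M, (((hk k).1.toFinset).image (Prod.mk k)).card :=
          Finset.card_biUnion_le
      _ ≤ ∑ _k : Fin M, (B + 1) := by
          apply Finset.sum_le_sum
          intro k _
          calc (((hk k).1.toFinset).image (Prod.mk k)).card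
              ≤ ((hk k).1.toFinset).card := Finset.card_image_le
            _ = {i : ℕ | s k i ∈ Set.Ioc σ (σ + t_high)}.ncard :=
                (Set.ncard_eq_toFinset_card _ (hk k).1).symm
            _ ≤ B + 1 := (hk k).2
      _ = M * (B + 1) := by simp [Finset.sum_const, Finset.card_univ]
  refine ⟨partA, ?_⟩
  -- part (b)
  intro u hu hNu σ
  set L := {ℓ : ℕ | u ℓ ∈ Set.Ioc σ (σ + t_high)} with hL
  obtain ⟨hWfin, hWcard⟩ := partA σ
  set W := {p : Fin M × ℕ | s p.1 p.2 ∈ Set.Ioc σ (σ + t_high)} with hW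
  have hsub : L ⊆ ↑(Finset.Icc (sInf L) (sInf L + C₀ * (B + 1))) := by
    intro ℓ hℓ
    have hne : L.Nonempty := ⟨ℓ, hℓ⟩
    have hmem : sInf L ∈ L := Nat.sInf_mem hne
    have hle : sInf L ≤ ℓ := Nat.sInf_le hℓ
    set ℓ₀ := sInf L
    set n := ℓ - ℓ₀ with hn
    -- pushes in (u (ℓ₀+j), u (ℓ₀+j+1)] for j < n are all in the window W
    have hPsub : ∀ j, j < n →
        {p : Fin M × ℕ | s p.1 p.2 ∈ Set.Ioc (u (ℓ₀ + j)) (u (ℓ₀ + j + 1))} ⊆ W := by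
      intro j hj p hp
      have h1 : σ < u (ℓ₀ + j) := lt_of_lt_of_le hmem.1 (hu.monotone (Nat.le_add_right _ _))
      have h2 : u (ℓ₀ + j + 1) ≤ u ℓ := hu.monotone (by omega)
      exact ⟨h1.trans hp.1, le_trans (le_trans hp.2 h2) hℓ.2⟩
    -- define disjoint Finsets of pushes
    set Q : ℕ → Finset (Fin M × ℕ) := fun j =>
      hWfin.toFinset.filter
        (fun p => s p.1 p.2 ∈ Set.Ioc (u (ℓ₀ + j)) (u (ℓ₀ + j + 1))) with hQ
    have hQeq : ∀ j, j < n →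
        (↑(Q j) : Set (Fin M × ℕ)) =
          {p : Fin M × ℕ | s p.1 p.2 ∈ Set.Ioc (u (ℓ₀ + j)) (u (ℓ₀ + j + 1))} := by
      intro j hj
      ext p
      simp only [hQ, Finset.coe_filter, Set.mem_setOf_eq, Set.Finite.mem_toFinset]
      constructor
      · rintro ⟨_, hp⟩; exact hp
      · intro hp; exact ⟨hPsub j hj hp, hp⟩
    have hQcard : ∀ j, j < n → N ≤ (Q j).card := by
      intro j hj
      have := hNu (ℓ₀ + j)
      rw [← hQeq j hj, Set.ncard_coe_finset] at this
      exact this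
    have hQdisj : ∀ j ∈ Finset.range n, ∀ j' ∈ Finset.range n, j ≠ j' →
        Disjoint (Q j) (Q j') := by
      have key : ∀ j j' : ℕ, j < j' → Disjoint (Q j) (Q j') := by
        intro j j' hjj'
        rw [Finset.disjoint_left]
        intro p hp hp'
        simp only [hQ, Finset.mem_filter] at hp hp'
        have h1 : u (ℓ₀ + j + 1) ≤ u (ℓ₀ + j') := hu.monotone (by omega)
        have := hp.2.2
        have := hp'.2.1
        linarith
      intro j _ j' _ hne
      rcases lt_or_gt_of_ne hne with h | h
      · exact key j j' h
      · exact (key j' j h).symm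
    have hbUsub : (Finset.range n).biUnion Q ⊆ hWfin.toFinset := by
      intro p hp
      simp only [Finset.mem_biUnion] at hp
      obtain ⟨j, _, hj⟩ := hp
      simp only [hQ, Finset.mem_filter] at hj
      exact hj.1
    have hcount : n * N ≤ M * (B + 1) := by
      calc n * N = ∑ _j ∈ Finset.range n, N := by simp [mul_comm]
        _ ≤ ∑ j ∈ Finset.range n, (Q j).card :=
            Finset.sum_le_sum (fun j hj => hQcard j (Finset.mem_range.mp hj))
        _ = ((Finset.range n).biUnion Q).card := (Finset.card_biUnion hQdisj).symm
        _ ≤ hWfin.toFinset.card := Finset.card_le_card hbUsub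
        _ = W.ncard := (Set.ncard_eq_toFinset_card _ hWfin).symm
        _ ≤ M * (B + 1) := hWcard
    have hnle : n ≤ C₀ * (B + 1) := by
      by_contra hcon
      push_neg at hcon
      have h1 : M * (B + 1) ≤ C₀ * N * (B + 1) := by
        exact Nat.mul_le_mul_right _ hMN
      have h2 : C₀ * (B + 1) * N < n * N := by
        exact (Nat.mul_lt_mul_right hN).mpr hcon
      nlinarith
    simp only [Finset.coe_Icc, Set.mem_Icc]
    exact ⟨hle, by omega⟩
  have hfin : L.Finite := Set.Finite.subset (Finset.Icc _ _).finite_toSet hsub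
  refine ⟨hfin, ?_⟩
  calc L.ncard ≤ (↑(Finset.Icc (sInf L) (sInf L + C₀ * (B + 1))) : Set ℕ).ncard :=
        Set.ncard_le_ncard hsub (Finset.Icc _ _).finite_toSet
    _ = (Finset.Icc (sInf L) (sInf L + C₀ * (B + 1))).card := Set.ncard_coe_finset _
    _ ≤ C₀ * (B + 1) + 1 := by rw [Nat.card_Icc]; omega
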